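/- arXiv:2503.07606 — 3 statements merged into one kernel-verified Lean document; each statement's English description precedes it below -/
import Mathlib

section
/- Let S be an N×N real symmetric matrix with nonnegative entries and all row sums equal to 1, and let 0 ≤ s ≤ t < 1. Then the matrix U := (1 − sS)·(1 − tS)^{-1} has nonnegative entries, each of its row sums equals (1 − s)/(1 − t), and consequently ‖Uv‖_∞ ≤ ((1 − s)/(1 − t))·‖v‖_∞ for every vector v ∈ ℂ^N. -/
open scoped BigOperators
open scoped Matrix

section aux

attribute [local instance] Matrix.linftyOpNormedRing Matrix.linftyOpNormedAlgebra

lemma aux_inv_nonneg {N : ℕ} (S : Matrix (Fin N) (Fin N) ℝ)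
    (hnn : ∀ i j, 0 ≤ S i j) (hrow : ∀ i, ∑ j, S i j = 1)
    (t : ℝ) (ht0 : 0 ≤ t) (ht1 : t < 1) :
    (∀ i j, 0 ≤ (1 - t • S)⁻¹ i j) ∧ IsUnit (1 - t • S).det := by
  have hS : ‖S‖ ≤ 1 := by
    rw [Matrix.linfty_opNorm_def]
    rw [← NNReal.coe_one, NNReal.coe_le_coe]
    refine Finset.sup_le fun i _ => ?_
    rw [← NNReal.coe_le_coe, NNReal.coe_sum, NNReal.coe_one]
    simp only [coe_nnnorm, Real.norm_eq_abs]
    calc ∑ j, |S i j| = ∑ j, S i j :=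
          Finset.sum_congr rfl fun j _ => abs_of_nonneg (hnn i j)
      _ = 1 := hrow i
      _ ≤ 1 := le_rfl
  have hnorm : ‖t • S‖ < 1 := by
    rw [norm_smul, Real.norm_eq_abs, abs_of_nonneg ht0]
    calc t * ‖S‖ ≤ t * 1 := mul_le_mul_of_nonneg_left hS ht0
      _ < 1 := by linarith
  have hUnit : IsUnit (1 - t • S) := isUnit_one_sub_of_norm_lt_one hnorm
  have hdet : IsUnit (1 - t • S).det := (Matrix.isUnit_iff_isUnit_det _).mp hUnit
  refine ⟨?_, hdet⟩
  have hsum : Summable (fun n : ℕ => (t • S) ^ n) :=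
    summable_geometric_of_norm_lt_one hnorm
  have hinv : (1 - t • S)⁻¹ = ∑' n : ℕ, (t • S) ^ n := by
    rw [Matrix.nonsing_inv_eq_ringInverse, ← geom_series_eq_inverse _ hnorm]
    rfl
  have hpow : ∀ (n : ℕ) i j, 0 ≤ ((t • S) ^ n) i j := by
    intro n
    induction n with
    | zero =>
      intro i j
      simp only [pow_zero, Matrix.one_apply]
      split <;> norm_num
    | succ n ih =>
      intro i j
      rw [pow_succ, Matrix.mul_apply]
      refine Finset.sum_nonneg fun k _ => mul_nonneg (ih i k) ?_
      exact mul_nonneg ht0 (hnn k j)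
  intro i j
  have happly : (1 - t • S)⁻¹ i j = ∑' n : ℕ, ((t • S) ^ n) i j := by
    rw [hinv]
    exact ((Matrix.entryLinearMap ℝ ℝ i j).toContinuousLinearMap.map_tsum hsum)
  rw [happly]
  exact tsum_nonneg fun n => hpow n i j

end aux

/-- **Positivity and max-norm contraction for the evolution kernel.**
Let `S` be an `N × N` real symmetric matrix with nonnegative entries and row sums `1`, and let
`0 ≤ s ≤ t < 1`. Then `U := (1 - s S)(1 - t S)⁻¹` has nonnegative entries, each row sum of `U`
equals `(1 - s)/(1 - t)`, and `‖U v‖_∞ ≤ ((1 - s)/(1 - t)) ‖v‖_∞` for every `v : ℂ^N`. -/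
theorem evolution_kernel_maxNorm {N : ℕ} (S : Matrix (Fin N) (Fin N) ℝ)
    (hsym : S.IsSymm) (hnn : ∀ i j, 0 ≤ S i j) (hrow : ∀ i, ∑ j, S i j = 1)
    (s t : ℝ) (hs0 : 0 ≤ s) (hst : s ≤ t) (ht1 : t < 1) :
    let U : Matrix (Fin N) (Fin N) ℝ := (1 - s • S) * (1 - t • S)⁻¹
    (∀ i j, 0 ≤ U i j) ∧
    (∀ i, ∑ j, U i j = (1 - s) / (1 - t)) ∧
    (∀ v : Fin N → ℂ, ∀ i,
      ‖(U.map (fun x : ℝ => (x : ℂ))).mulVec v i‖ ≤ (1 - s) / (1 - t) * ⨆ j, ‖v j‖) := by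
  intro U
  have ht0 : 0 ≤ t := le_trans hs0 hst
  obtain ⟨hRnn, hdet⟩ := aux_inv_nonneg S hnn hrow t ht0 ht1
  set R : Matrix (Fin N) (Fin N) ℝ := (1 - t • S)⁻¹ with hR
  have ht1' : (1 : ℝ) - t ≠ 0 := by linarith
  -- nonnegativity
  have hUnn : ∀ i j, 0 ≤ U i j := by
    have hdecomp : U = 1 + (t - s) • (S * R) := by
      have h1 : (1 : Matrix (Fin N) (Fin N) ℝ) - s • S
          = (1 - t • S) + (t - s) • S := by
        rw [sub_smul]; abel
      calc U = ((1 - t • S) + (t - s) • S) * R := by rw [hR, ← h1]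
        _ = (1 - t • S) * R + ((t - s) • S) * R := by rw [add_mul]
        _ = 1 + (t - s) • (S * R) := by
            rw [hR, Matrix.mul_nonsing_inv _ hdet, Matrix.smul_mul]
    intro i j
    rw [hdecomp]
    simp only [Matrix.add_apply, Matrix.smul_apply, Matrix.one_apply, smul_eq_mul]
    have h2 : 0 ≤ (S * R) i j := by
      rw [Matrix.mul_apply]
      exact Finset.sum_nonneg fun k _ => mul_nonneg (hnn i k) (hRnn k j)
    have h3 : 0 ≤ (t - s) * (S * R) i j := mul_nonneg (by linarith) h2
    split <;> linarith
  -- row sums of R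
  have hRrow : ∀ i, ∑ j, R i j = (1 - t)⁻¹ := by
    intro i
    have h1 : (1 - t • S) *ᵥ (fun _ => (1 : ℝ)) = fun _ => 1 - t := by
      funext k
      simp only [Matrix.mulVec, dotProduct, Matrix.sub_apply, Matrix.one_apply,
        Matrix.smul_apply, smul_eq_mul, mul_one, Finset.sum_sub_distrib, ← Finset.mul_sum,
        hrow k]
      simp
    have h2 : R *ᵥ ((1 - t • S) *ᵥ (fun _ => (1 : ℝ))) = fun _ => (1 : ℝ) := by
      rw [Matrix.mulVec_mulVec, hR, Matrix.nonsing_inv_mul _ hdet, Matrix.one_mulVec]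
    rw [h1] at h2
    have h3 : (fun _ : Fin N => (1 : ℝ) - t) = (1 - t) • (fun _ => (1 : ℝ)) := by
      funext k; simp
    rw [h3, Matrix.mulVec_smul] at h2
    have h4 : R *ᵥ (fun _ => (1 : ℝ)) = fun _ => (1 - t)⁻¹ := by
      funext k
      have := congrFun h2 k
      simp only [Pi.smul_apply, smul_eq_mul] at this
      field_simp
      linarith [this]
    have h5 := congrFun h4 i
    simpa [Matrix.mulVec, dotProduct] using h5
  -- row sums of U
  have hUrow : ∀ i, ∑ j, U i j = (1 - s) / (1 - t) := by
    intro i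
    have h6 : ∑ j, U i j = ∑ k, (1 - s • S) i k * ∑ j, R k j := by
      calc ∑ j, U i j = ∑ j, ∑ k, (1 - s • S) i k * R k j := by
            refine Finset.sum_congr rfl fun j _ => ?_
            show ((1 - s • S) * (1 - t • S)⁻¹) i j = _
            rw [Matrix.mul_apply]
        _ = ∑ k, ∑ j, (1 - s • S) i k * R k j := by rw [Finset.sum_comm]
        _ = ∑ k, (1 - s • S) i k * ∑ j, R k j := by simp_rw [← Finset.mul_sum]
    rw [h6]
    have h7 : ∑ k, (1 - s • S) i k * ∑ j, R k j
        = (1 - t)⁻¹ * ∑ k, (1 - s • S) i k := by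
      simp_rw [hRrow, ← Finset.sum_mul]
      rw [mul_comm]
    rw [h7]
    have hB : ∑ k, (1 - s • S) i k = 1 - s := by
      simp only [Matrix.sub_apply, Matrix.one_apply, Matrix.smul_apply, smul_eq_mul,
        Finset.sum_sub_distrib, ← Finset.mul_sum, hrow i]
      simp
    rw [hB]; ring
  refine ⟨hUnn, hUrow, ?_⟩
  intro v i
  have hNe : Nonempty (Fin N) := ⟨i⟩
  set M : ℝ := ⨆ j, ‖v j‖ with hM
  have hle : ∀ j, ‖v j‖ ≤ M := fun j =>
    le_ciSup (f := fun j => ‖v j‖) (Finite.bddAbove_range _) j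
  have hM0 : 0 ≤ M := le_trans (norm_nonneg (v i)) (hle i)
  have hent : (U.map (fun x : ℝ => (x : ℂ))).mulVec v i = ∑ j, (U i j : ℂ) * v j := by
    simp [Matrix.mulVec, dotProduct, Matrix.map_apply]
  rw [hent]
  calc ‖∑ j, (U i j : ℂ) * v j‖ ≤ ∑ j, ‖(U i j : ℂ) * v j‖ := norm_sum_le _ _
    _ = ∑ j, U i j * ‖v j‖ := by
        refine Finset.sum_congr rfl fun j _ => ?_
        rw [norm_mul, Complex.norm_real, Real.norm_eq_abs, abs_of_nonneg (hUnn i j)]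
    _ ≤ ∑ j, U i j * M := by
        refine Finset.sum_le_sum fun j _ => ?_
        exact mul_le_mul_of_nonneg_left (hle j) (hUnn i j)
    _ = (1 - s) / (1 - t) * M := by rw [← Finset.sum_mul, hUrow i]
end

section
/- There exists a universal constant C > 0 such that for every a ≥ 0, ∫_0^a exp(√a − √x − √(a−x)) dx ≤ C. -/
open intervalIntegral

noncomputable def cc : ℝ := 1 - Real.sqrt 2 / 2

lemma cc_pos : 0 < cc := by
  have h2 : Real.sqrt 2 ^ 2 = 2 := Real.sq_sqrt (by norm_num)
  have h3 : 0 ≤ Real.sqrt 2 := Real.sqrt_nonneg 2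
  have : Real.sqrt 2 < 2 := by nlinarith
  unfold cc; linarith

lemma half_ineq {x y : ℝ} (hx : 0 ≤ x) (hxy : x ≤ y) :
    Real.sqrt (x + y) ≤ Real.sqrt y + Real.sqrt 2 / 2 * Real.sqrt x := by
  have hy : 0 ≤ y := hx.trans hxy
  have sx := Real.sq_sqrt hx
  have sy := Real.sq_sqrt hy
  have s2 : Real.sqrt 2 ^ 2 = 2 := Real.sq_sqrt (by norm_num)
  have nx := Real.sqrt_nonneg x
  have ny := Real.sqrt_nonneg y
  have n2 := Real.sqrt_nonneg 2
  have hmono : Real.sqrt x ≤ Real.sqrt y := Real.sqrt_le_sqrt hxy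
  have h2ge1 : (1:ℝ) ≤ Real.sqrt 2 := by nlinarith
  have hrhs : 0 ≤ Real.sqrt y + Real.sqrt 2 / 2 * Real.sqrt x := by positivity
  have key : x + y ≤ (Real.sqrt y + Real.sqrt 2 / 2 * Real.sqrt x) ^ 2 := by
    nlinarith [mul_le_mul_of_nonneg_right hmono nx,
      mul_nonneg (mul_nonneg n2 ny) nx]
  calc Real.sqrt (x + y) ≤ Real.sqrt ((Real.sqrt y + Real.sqrt 2 / 2 * Real.sqrt x) ^ 2) :=
        Real.sqrt_le_sqrt key
    _ = Real.sqrt y + Real.sqrt 2 / 2 * Real.sqrt x := Real.sqrt_sq hrhs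

lemma pt_bound (a x : ℝ) (hx : 0 ≤ x) (hxa : x ≤ a) :
    Real.exp (Real.sqrt a - Real.sqrt x - Real.sqrt (a - x)) ≤
      Real.exp (-(cc * Real.sqrt x)) + Real.exp (-(cc * Real.sqrt (a - x))) := by
  have hax : 0 ≤ a - x := sub_nonneg.2 hxa
  rcases le_total x (a - x) with h | h
  · have h1 : Real.sqrt a ≤ Real.sqrt (a - x) + Real.sqrt 2 / 2 * Real.sqrt x := by
      have := half_ineq hx h
      rwa [show x + (a - x) = a by ring] at this
    have : Real.sqrt a - Real.sqrt x - Real.sqrt (a - x) ≤ -(cc * Real.sqrt x) := by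
      unfold cc; nlinarith [Real.sqrt_nonneg x]
    calc Real.exp (Real.sqrt a - Real.sqrt x - Real.sqrt (a - x))
        ≤ Real.exp (-(cc * Real.sqrt x)) := Real.exp_le_exp.2 this
      _ ≤ _ := le_add_of_nonneg_right (Real.exp_pos _).le
  · have h1 : Real.sqrt a ≤ Real.sqrt x + Real.sqrt 2 / 2 * Real.sqrt (a - x) := by
      have := half_ineq hax h
      rwa [show (a - x) + x = a by ring] at this
    have : Real.sqrt a - Real.sqrt x - Real.sqrt (a - x) ≤ -(cc * Real.sqrt (a - x)) := by
      unfold cc; nlinarith [Real.sqrt_nonneg (a - x)]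
    calc Real.exp (Real.sqrt a - Real.sqrt x - Real.sqrt (a - x))
        ≤ Real.exp (-(cc * Real.sqrt (a - x))) := Real.exp_le_exp.2 this
      _ ≤ _ := le_add_of_nonneg_left (Real.exp_pos _).le

noncomputable def FF (x : ℝ) : ℝ :=
  -(2 / cc ^ 2) * (cc * Real.sqrt x + 1) * Real.exp (-(cc * Real.sqrt x))

lemma FF_deriv {x : ℝ} (hx : 0 < x) :
    HasDerivAt FF (Real.exp (-(cc * Real.sqrt x))) x := by
  have hsx : Real.sqrt x ≠ 0 := ne_of_gt (Real.sqrt_pos.2 hx)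
  have hs : HasDerivAt Real.sqrt (1 / (2 * Real.sqrt x)) x := Real.hasDerivAt_sqrt hx.ne'
  set u := Real.sqrt x with hu
  have hg : HasDerivAt (fun v : ℝ => -(2 / cc ^ 2) * (cc * v + 1)) (-(2 / cc ^ 2) * cc) u := by
    simpa using (((hasDerivAt_id u).const_mul cc).add_const 1).const_mul (-(2 / cc ^ 2))
  have hh : HasDerivAt (fun v : ℝ => Real.exp (-(cc * v)))
      (Real.exp (-(cc * u)) * -cc) u := by
    have h1 : HasDerivAt (fun v : ℝ => -(cc * v)) (-cc) u := by
      simpa [Pi.neg_def] using ((hasDerivAt_id u).const_mul cc).neg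
    exact h1.exp
  have hmul := hg.mul hh
  have hcomp := hmul.comp x hs
  have hcc := cc_pos
  exact hcomp.congr_deriv (by
  field_simp
  ring)

lemma integral_exp_neg_sqrt_le {a : ℝ} (ha : 0 ≤ a) :
    (∫ x in (0:ℝ)..a, Real.exp (-(cc * Real.sqrt x))) ≤ 2 / cc ^ 2 := by
  have hcc := cc_pos
  have hcont : Continuous fun x : ℝ => Real.exp (-(cc * Real.sqrt x)) := by
    continuity
  have hFF : Continuous FF := by unfold FF; continuity
  have key := intervalIntegral.integral_eq_sub_of_hasDeriv_right_of_le ha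
    hFF.continuousOn
    (fun x hx => (FF_deriv hx.1).hasDerivWithinAt)
    (hcont.intervalIntegrable 0 a)
  rw [key]
  have hF0 : FF 0 = -(2 / cc ^ 2) := by
    simp [FF, Real.sqrt_zero]
  have hFa : FF a ≤ 0 := by
    have h1 : 0 ≤ cc * Real.sqrt a + 1 := by positivity
    have h2 : 0 < Real.exp (-(cc * Real.sqrt a)) := Real.exp_pos _
    have h3 : 0 < 2 / cc ^ 2 := by positivity
    unfold FF
    nlinarith [mul_nonneg (mul_nonneg h3.le h1) h2.le]
  rw [hF0]
  linarith

/-- There is a universal constant `C > 0` such that for every `a ≥ 0`,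
`∫_0^a exp(√a − √x − √(a−x)) dx ≤ C`. -/
theorem integral_exp_sqrt_convolution_bound :
    ∃ C : ℝ, 0 < C ∧ ∀ a : ℝ, 0 ≤ a →
      (∫ x in (0 : ℝ)..a,
        Real.exp (Real.sqrt a - Real.sqrt x - Real.sqrt (a - x))) ≤ C := by
  have hcc := cc_pos
  refine ⟨4 / cc ^ 2, by positivity, fun a ha => ?_⟩
  have hcont1 : Continuous fun x : ℝ =>
      Real.exp (Real.sqrt a - Real.sqrt x - Real.sqrt (a - x)) := by continuity
  have hcont2 : Continuous fun x : ℝ => Real.exp (-(cc * Real.sqrt x)) := by continuity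
  have hcont3 : Continuous fun x : ℝ => Real.exp (-(cc * Real.sqrt (a - x))) := by continuity
  have hmono : (∫ x in (0:ℝ)..a,
      Real.exp (Real.sqrt a - Real.sqrt x - Real.sqrt (a - x))) ≤
      ∫ x in (0:ℝ)..a,
        (Real.exp (-(cc * Real.sqrt x)) + Real.exp (-(cc * Real.sqrt (a - x)))) := by
    apply intervalIntegral.integral_mono_on ha
      (hcont1.intervalIntegrable 0 a)
      ((hcont2.add hcont3).intervalIntegrable 0 a)
    intro x hx
    exact pt_bound a x hx.1 hx.2
  have hsplit : (∫ x in (0:ℝ)..a,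
      (Real.exp (-(cc * Real.sqrt x)) + Real.exp (-(cc * Real.sqrt (a - x))))) =
      (∫ x in (0:ℝ)..a, Real.exp (-(cc * Real.sqrt x))) +
      (∫ x in (0:ℝ)..a, Real.exp (-(cc * Real.sqrt (a - x)))) :=
    intervalIntegral.integral_add (hcont2.intervalIntegrable 0 a)
      (hcont3.intervalIntegrable 0 a)
  have hrefl : (∫ x in (0:ℝ)..a, Real.exp (-(cc * Real.sqrt (a - x)))) =
      ∫ x in (0:ℝ)..a, Real.exp (-(cc * Real.sqrt x)) := by
    have := intervalIntegral.integral_comp_sub_left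
      (a := (0:ℝ)) (b := a) (fun y => Real.exp (-(cc * Real.sqrt y))) a
    simpa using this
  have hb := integral_exp_neg_sqrt_le ha
  have h4 : 2 / cc ^ 2 + 2 / cc ^ 2 = 4 / cc ^ 2 := by ring
  linarith [hmono, hb]
end

section
/- For z ∈ ℂ with Im z > 0, define m(z) := ∫_{−2}^{2} (1/(2π))·√(4 − x²)/(x − z) dx. Then m(z) satisfies the quadratic equation m(z)² + z·m(z) + 1 = 0. -/
open intervalIntegral

open Complex

lemma hasDerivAt_expa (a : ℂ) (θ : ℝ) :
    HasDerivAt (fun t : ℝ => Complex.exp (t * a)) (a * Complex.exp (θ * a)) θ := by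
  have h1 : HasDerivAt (fun t : ℝ => ((t : ℂ) * a)) a θ := by
    simpa using (Complex.ofRealCLM.hasDerivAt (x := θ)).mul_const a
  simpa [mul_comm] using h1.cexp

lemma cont_expa (a : ℂ) : Continuous (fun t : ℝ => Complex.exp (t * a)) :=
  Complex.continuous_exp.comp ((Complex.continuous_ofReal.mul continuous_const))

lemma abs_exp_mul (θ : ℝ) : ‖Complex.exp (θ * I)‖ = 1 := by
  simp [Complex.norm_exp]

lemma abs_exp_mul' (θ : ℝ) : ‖Complex.exp (θ * -I)‖ = 1 := by
  simp [Complex.norm_exp]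

lemma exp_neg_pi_mul_I : Complex.exp (-(Real.pi * I)) = -1 := by
  rw [Complex.exp_neg, Complex.exp_pi_mul_I]; norm_num

lemma integral_exp_pm (a : ℂ) (ha : a ≠ 0) :
    ∫ θ : ℝ in (-Real.pi)..Real.pi, Complex.exp (θ * a)
      = a⁻¹ * (Complex.exp (Real.pi * a) - Complex.exp (-Real.pi * a)) := by
  have h : ∀ θ ∈ Set.uIcc (-Real.pi) Real.pi,
      HasDerivAt (fun t : ℝ => a⁻¹ * Complex.exp (t * a)) (Complex.exp (θ * a)) θ := by
    intro θ _
    have := (hasDerivAt_expa a θ).const_mul a⁻¹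
    exact this.congr_deriv (by rw [← mul_assoc, inv_mul_cancel₀ ha, one_mul])
  rw [integral_eq_sub_of_hasDerivAt h ((cont_expa a).intervalIntegrable _ _)]
  push_cast
  ring

lemma integral_exp_I : ∫ θ : ℝ in (-Real.pi)..Real.pi, Complex.exp (θ * I) = 0 := by
  rw [integral_exp_pm I I_ne_zero]
  rw [show (-(Real.pi:ℂ)) * I = -((Real.pi:ℂ) * I) by ring]
  simp [Complex.exp_pi_mul_I, _root_.exp_neg_pi_mul_I]

lemma integral_exp_negI : ∫ θ : ℝ in (-Real.pi)..Real.pi, Complex.exp (θ * -I) = 0 := by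
  rw [integral_exp_pm (-I) (neg_ne_zero.2 I_ne_zero)]
  rw [show (-(Real.pi:ℂ)) * -I = ((Real.pi:ℂ) * I) by ring]
  simp [Complex.exp_pi_mul_I, _root_.exp_neg_pi_mul_I]

lemma alg1 (e q : ℂ) (hq0 : q ≠ 0) (he : e - q ≠ 0) (hne : 1 - e/q ≠ 0) :
    (-I * (-(I * e / q) / (1 - e / q)) - 1) / q = (e - q)⁻¹ := by
  have hqe : q - e ≠ 0 := fun h => he (by rw [← neg_sub] at h; simpa using neg_eq_zero.1 h)
  field_simp
  ring_nf
  simp [Complex.I_sq]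
  ring_nf

lemma alg2 (e e' q : ℂ) (hq0 : q ≠ 0) (he' : e' ≠ 0) (hmul : e * e' = 1)
    (hne : 1 - e'/q ≠ 0) (hne2 : e - q⁻¹ ≠ 0) :
    -I * q * (-(-I * e' / q) / (1 - e' / q)) = (e - q⁻¹)⁻¹ := by
  have hqe : q - e' ≠ 0 := by
    intro h
    apply hne
    rw [sub_eq_zero] at h ⊢
    rw [← h]; field_simp
  have hne3 : q * e - 1 ≠ 0 := by
    intro h
    apply hqe
    linear_combination e' * h - q * hmul
  have hne4 : -1 + q * e ≠ 0 := fun h => hne3 (by linear_combination h)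
  refine (inv_eq_of_mul_eq_one_right ?_).symm
  field_simp
  linear_combination (e' - e*q*e') * Complex.I_sq + q * hmul

section
variable {q : ℂ}

lemma slit_aux (hq : 1 < ‖q‖) {w : ℂ} (hw : ‖w‖ = 1) : (1 - w / q) ∈ Complex.slitPlane := by
  have hq1 : (0:ℝ) < ‖q‖ := lt_trans one_pos hq
  have h1 : ‖w / q‖ < 1 := by
    rw [norm_div, hw]
    rw [div_lt_one hq1]; exact hq
  have h2 : (w / q).re < 1 := lt_of_le_of_lt (Complex.re_le_norm _) h1
  exact Complex.mem_slitPlane_iff.2 (Or.inl (by simp; linarith))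

lemma one_sub_ne (hq : 1 < ‖q‖) {w : ℂ} (hw : ‖w‖ = 1) : (1 : ℂ) - w / q ≠ 0 := by
  have := slit_aux hq hw
  exact Complex.slitPlane_ne_zero this

lemma q_ne_zero (hq : 1 < ‖q‖) : q ≠ 0 := by
  intro h; rw [h] at hq; simp at hq; linarith

lemma exp_sub_q_ne (hq : 1 < ‖q‖) (θ : ℝ) : Complex.exp (θ * I) - q ≠ 0 := by
  intro h
  have := abs_exp_mul θ
  rw [sub_eq_zero] at h
  rw [h] at this
  exact absurd this.symm (ne_of_lt hq)

lemma exp_sub_qinv_ne (hq : 1 < ‖q‖) (θ : ℝ) : Complex.exp (θ * I) - q⁻¹ ≠ 0 := by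
  intro h
  rw [sub_eq_zero] at h
  have h1 : ‖q⁻¹‖ < 1 := by
    rw [norm_inv]
    rw [inv_lt_one_iff₀]
    right; exact hq
  rw [← h] at h1
  rw [abs_exp_mul] at h1
  linarith

lemma integral_inv_exp_sub_q (hq : 1 < ‖q‖) :
    ∫ θ : ℝ in (-Real.pi)..Real.pi, (Complex.exp (θ * I) - q)⁻¹ = -2 * Real.pi / q := by
  have hq0 : q ≠ 0 := q_ne_zero hq
  set F : ℝ → ℂ := fun θ => (-I * Complex.log (1 - Complex.exp (θ * I) / q) - θ) / q with hF
  have hder : ∀ θ ∈ Set.uIcc (-Real.pi) Real.pi,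
      HasDerivAt F ((Complex.exp (θ * I) - q)⁻¹) θ := by
    intro θ _
    have hinner : HasDerivAt (fun t : ℝ => 1 - Complex.exp (t * I) / q)
        (-(I * Complex.exp (θ * I) / q)) θ := by
      simpa using (((hasDerivAt_expa I θ).div_const q).const_sub 1)
    have hlog := hinner.clog_real (slit_aux hq (abs_exp_mul θ))
    have h2 : HasDerivAt (fun t : ℝ => (t : ℂ)) 1 θ := Complex.ofRealCLM.hasDerivAt
    have := (((hlog.const_mul (-I)).sub h2).div_const q)
    exact this.congr_deriv (alg1 _ _ hq0 (exp_sub_q_ne hq θ) (one_sub_ne hq (abs_exp_mul θ)))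
  have hInt : IntervalIntegrable (fun θ : ℝ => (Complex.exp (θ * I) - q)⁻¹)
      MeasureTheory.volume (-Real.pi) Real.pi :=
    (((cont_expa I).sub continuous_const).inv₀ (fun θ => exp_sub_q_ne hq θ)).intervalIntegrable _ _
  rw [integral_eq_sub_of_hasDerivAt hder hInt]
  rw [hF]
  simp only []
  rw [show ((Real.pi : ℝ) : ℂ) * I = (Real.pi : ℂ) * I from rfl]
  rw [show ((-Real.pi : ℝ) : ℂ) * I = -((Real.pi:ℂ) * I) by push_cast; ring]
  rw [Complex.exp_pi_mul_I, _root_.exp_neg_pi_mul_I]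
  push_cast
  field_simp
  ring

lemma integral_inv_exp_sub_qinv (hq : 1 < ‖q‖) :
    ∫ θ : ℝ in (-Real.pi)..Real.pi, (Complex.exp (θ * I) - q⁻¹)⁻¹ = 0 := by
  have hq0 : q ≠ 0 := q_ne_zero hq
  set F : ℝ → ℂ := fun θ => -I * q * Complex.log (1 - Complex.exp (θ * -I) / q) with hF
  have hder : ∀ θ ∈ Set.uIcc (-Real.pi) Real.pi,
      HasDerivAt F ((Complex.exp (θ * I) - q⁻¹)⁻¹) θ := by
    intro θ _
    have hinner : HasDerivAt (fun t : ℝ => 1 - Complex.exp (t * -I) / q)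
        (-(-I * Complex.exp (θ * -I) / q)) θ := by
      simpa using (((hasDerivAt_expa (-I) θ).div_const q).const_sub 1)
    have hlog := hinner.clog_real (slit_aux hq (abs_exp_mul' θ))
    have := hlog.const_mul (-I * q)
    have hmul : Complex.exp (θ * I) * Complex.exp (θ * -I) = 1 := by
      rw [← Complex.exp_add]; ring_nf; exact Complex.exp_zero
    exact this.congr_deriv (alg2 _ _ _ hq0 (Complex.exp_ne_zero _) hmul
      (one_sub_ne hq (abs_exp_mul' θ)) (exp_sub_qinv_ne hq θ))
  have hInt : IntervalIntegrable (fun θ : ℝ => (Complex.exp (θ * I) - q⁻¹)⁻¹)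
      MeasureTheory.volume (-Real.pi) Real.pi :=
    (((cont_expa I).sub continuous_const).inv₀ (fun θ => exp_sub_qinv_ne hq θ)).intervalIntegrable _ _
  rw [integral_eq_sub_of_hasDerivAt hder hInt]
  rw [hF]
  simp only []
  rw [show ((Real.pi : ℝ) : ℂ) * -I = -((Real.pi:ℂ) * I) by push_cast; ring]
  rw [show ((-Real.pi : ℝ) : ℂ) * -I = ((Real.pi:ℂ) * I) by push_cast; ring]
  rw [Complex.exp_pi_mul_I, _root_.exp_neg_pi_mul_I]
  ring

end

-- pointwise partial fraction identity (pure algebra)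
lemma alg3 (u q : ℂ) (hq0 : q ≠ 0) (hu0 : u ≠ 0)
    (huq : u - q ≠ 0) (huq' : u - q⁻¹ ≠ 0) :
    ((u⁻¹ - u) * I) ^ 2 / (u + u⁻¹ - (q + q⁻¹))
      = -u⁻¹ - (q ^ 2 - 1) * (u - q)⁻¹ + ((q ^ 2 - 1) / q ^ 2) * (u - q⁻¹)⁻¹ - u - (q + q⁻¹) := by
  have h1 : u * q - 1 ≠ 0 := by
    intro h
    apply huq'
    rw [sub_eq_zero] at h ⊢
    field_simp
    linear_combination h
  have h4 : u - q⁻¹ = (u * q - 1) / q := by field_simp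
  have hden : u + u⁻¹ - (q + q⁻¹) ≠ 0 := by
    have hfac : u + u⁻¹ - (q + q⁻¹) = (u - q) * ((u * q - 1) / q) / u := by
      field_simp; ring
    rw [hfac]
    exact div_ne_zero (mul_ne_zero huq (div_ne_zero h1 hq0)) hu0
  have hd : u ^ 2 * q ^ 5 + (-(u ^ 3 * q ^ 4) - u ^ 3 * q ^ 6) + u ^ 4 * q ^ 5 ≠ 0 := by
    have he : u ^ 2 * q ^ 5 + (-(u ^ 3 * q ^ 4) - u ^ 3 * q ^ 6) + u ^ 4 * q ^ 5
        = u ^ 2 * q ^ 4 * ((u * q - 1) * (u - q)) := by ring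
    rw [he]
    exact mul_ne_zero (mul_ne_zero (pow_ne_zero 2 hu0) (pow_ne_zero 4 hq0)) (mul_ne_zero h1 huq)
  rw [div_eq_iff hden, mul_pow, I_sq, h4]
  have hcan : (u ^ 2 * q ^ 5 + (-(u ^ 3 * q ^ 4) - u ^ 3 * q ^ 6) + u ^ 4 * q ^ 5)
      * (u ^ 2 * q ^ 5 + (-(u ^ 3 * q ^ 4) - u ^ 3 * q ^ 6) + u ^ 4 * q ^ 5)⁻¹ = 1 :=
    mul_inv_cancel₀ hd
  field_simp [huq, h1]
  ring

lemma key_integral (z q : ℂ) (hq : 1 < ‖q‖) (hzq : z = q + q⁻¹) :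
    ∫ θ : ℝ in (-Real.pi)..Real.pi,
        ((2 * Real.sin θ : ℝ) : ℂ) ^ 2 / (2 * (Real.cos θ : ℂ) - z)
      = -4 * Real.pi / q := by
  have hq0 : q ≠ 0 := q_ne_zero hq
  have hcongr : ∀ θ : ℝ,
      ((2 * Real.sin θ : ℝ) : ℂ) ^ 2 / (2 * (Real.cos θ : ℂ) - z)
        = -Complex.exp (θ * -I) - (q ^ 2 - 1) * (Complex.exp (θ * I) - q)⁻¹
          + ((q ^ 2 - 1) / q ^ 2) * (Complex.exp (θ * I) - q⁻¹)⁻¹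
          - Complex.exp (θ * I) - z := by
    intro θ
    have hv : Complex.exp (θ * -I) = (Complex.exp (θ * I))⁻¹ := by
      rw [show (θ:ℂ) * -I = -((θ:ℂ) * I) by ring, Complex.exp_neg]
    have hsin : Complex.sin (θ : ℂ)
        = ((Complex.exp (θ * I))⁻¹ - Complex.exp (θ * I)) * I / 2 := by
      rw [Complex.sin, show -(θ:ℂ) * I = (θ:ℂ) * -I by ring, hv]
    have hcos : Complex.cos (θ : ℂ)
        = (Complex.exp (θ * I) + (Complex.exp (θ * I))⁻¹) / 2 := by
      rw [Complex.cos, show -(θ:ℂ) * I = (θ:ℂ) * -I by ring, hv]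
    have h1 := alg3 (Complex.exp (θ * I)) q hq0 (Complex.exp_ne_zero _)
      (exp_sub_q_ne hq θ) (exp_sub_qinv_ne hq θ)
    push_cast
    rw [hsin, hcos, hv, hzq]
    rw [← h1]
    congr 1
    · ring
    · ring
  rw [intervalIntegral.integral_congr (g := fun θ : ℝ =>
      -Complex.exp (θ * -I) - (q ^ 2 - 1) * (Complex.exp (θ * I) - q)⁻¹
        + ((q ^ 2 - 1) / q ^ 2) * (Complex.exp (θ * I) - q⁻¹)⁻¹
        - Complex.exp (θ * I) - z) (fun θ _ => hcongr θ)]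
  have c1 : Continuous fun θ : ℝ => Complex.exp (θ * -I) := cont_expa (-I)
  have c2 : Continuous fun θ : ℝ => (Complex.exp (θ * I) - q)⁻¹ :=
    ((cont_expa I).sub continuous_const).inv₀ (fun θ => exp_sub_q_ne hq θ)
  have c3 : Continuous fun θ : ℝ => (Complex.exp (θ * I) - q⁻¹)⁻¹ :=
    ((cont_expa I).sub continuous_const).inv₀ (fun θ => exp_sub_qinv_ne hq θ)
  have i1 : IntervalIntegrable (fun θ : ℝ => -Complex.exp (θ * -I))
      MeasureTheory.volume (-Real.pi) Real.pi := c1.neg.intervalIntegrable _ _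
  have i2 : IntervalIntegrable (fun θ : ℝ => (q ^ 2 - 1) * (Complex.exp (θ * I) - q)⁻¹)
      MeasureTheory.volume (-Real.pi) Real.pi := (continuous_const.mul c2).intervalIntegrable _ _
  have i3 : IntervalIntegrable
      (fun θ : ℝ => ((q ^ 2 - 1) / q ^ 2) * (Complex.exp (θ * I) - q⁻¹)⁻¹)
      MeasureTheory.volume (-Real.pi) Real.pi := (continuous_const.mul c3).intervalIntegrable _ _
  have i4 : IntervalIntegrable (fun θ : ℝ => Complex.exp (θ * I))
      MeasureTheory.volume (-Real.pi) Real.pi := (cont_expa I).intervalIntegrable _ _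
  have i5 : IntervalIntegrable (fun _ : ℝ => z)
      MeasureTheory.volume (-Real.pi) Real.pi := intervalIntegrable_const
  rw [intervalIntegral.integral_sub (((i1.sub i2).add i3).sub i4) i5,
      intervalIntegral.integral_sub ((i1.sub i2).add i3) i4,
      intervalIntegral.integral_add (i1.sub i2) i3,
      intervalIntegral.integral_sub i1 i2,
      intervalIntegral.integral_neg, intervalIntegral.integral_const_mul,
      intervalIntegral.integral_const_mul,
      integral_exp_negI, integral_exp_I,
      integral_inv_exp_sub_q hq, integral_inv_exp_sub_qinv hq,
      intervalIntegral.integral_const, hzq]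
  have hpi : (Real.pi : ℂ) ≠ 0 := Complex.ofReal_ne_zero.2 Real.pi_ne_zero
  rw [sub_neg_eq_add, Complex.real_smul]
  push_cast
  field_simp
  ring

lemma exists_q (z : ℂ) (hz : 0 < z.im) : ∃ q : ℂ, 1 < ‖q‖ ∧ z = q + q⁻¹ := by
  obtain ⟨w, hw⟩ : ∃ w : ℂ, w ^ 2 = z ^ 2 - 4 :=
    ⟨(z ^ 2 - 4) ^ ((2 : ℂ)⁻¹), by
      have := Complex.cpow_nat_inv_pow (z ^ 2 - 4) (two_ne_zero)
      simpa using this⟩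
  set q1 : ℂ := (z + w) / 2 with hq1
  set q2 : ℂ := (z - w) / 2 with hq2
  have hmul : q1 * q2 = 1 := by
    rw [hq1, hq2]
    field_simp
    linear_combination -hw
  have hsum : q1 + q2 = z := by rw [hq1, hq2]; ring
  have hq10 : q1 ≠ 0 := by
    intro h; rw [h, zero_mul] at hmul; exact zero_ne_one hmul
  have hq20 : q2 ≠ 0 := by
    intro h; rw [h, mul_zero] at hmul; exact zero_ne_one hmul
  have hinv : q2 = q1⁻¹ := eq_inv_of_mul_eq_one_left (by rw [mul_comm]; exact hmul)
  have habs : ‖q1‖ * ‖q2‖ = 1 := by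
    rw [← norm_mul, hmul, norm_one]
  have hne1 : ‖q1‖ ≠ 1 := by
    intro h1
    have h2 : ‖q2‖ = 1 := by rw [h1, one_mul] at habs; exact habs
    have hconj : q2 = (starRingEnd ℂ) q1 := by
      rw [hinv, Complex.inv_def, Complex.normSq_eq_norm_sq, h1]
      simp
    have : z.im = 0 := by
      rw [← hsum, Complex.add_im, hconj, Complex.conj_im]
      ring
    rw [this] at hz; exact lt_irrefl 0 hz
  rcases lt_or_gt_of_ne hne1 with hlt | hgt
  · refine ⟨q2, ?_, ?_⟩
    · have : ‖q1‖ > 0 := norm_pos_iff.mpr hq10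
      rw [← habs]
      nlinarith [norm_nonneg q2]
    · rw [← hsum, hinv]
      rw [inv_inv]
      ring
  · exact ⟨q1, hgt, by rw [← hsum, hinv]⟩

/-- **Self-consistent equation for the semicircle Stieltjes transform.**
For `z : ℂ` with `Im z > 0`, the Stieltjes transform
`m(z) = ∫_{−2}^{2} (2π)⁻¹ √(4 − x²)/(x − z) dx` of the semicircle law satisfies
`m(z)² + z m(z) + 1 = 0`. -/
theorem semicircle_stieltjes_quadratic (z : ℂ) (hz : 0 < z.im) :
    let m : ℂ := ∫ x in (-2 : ℝ)..2,
      ((1 / (2 * Real.pi) * Real.sqrt (4 - x ^ 2) : ℝ) : ℂ) / ((x : ℂ) - z)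
    m ^ 2 + z * m + 1 = 0 := by
  intro m
  obtain ⟨q, hq, hzq⟩ := exists_q z hz
  have hq0 : q ≠ 0 := q_ne_zero hq
  have hpi : (Real.pi : ℂ) ≠ 0 := Complex.ofReal_ne_zero.2 Real.pi_ne_zero
  -- the integrand, as a continuous function on ℝ
  set g : ℝ → ℂ := fun x =>
    ((1 / (2 * Real.pi) * Real.sqrt (4 - x ^ 2) : ℝ) : ℂ) / ((x : ℂ) - z) with hg
  have hgne : ∀ x : ℝ, (x : ℂ) - z ≠ 0 := by
    intro x h
    rw [sub_eq_zero] at h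
    have : z.im = 0 := by rw [← h]; simp
    rw [this] at hz; exact lt_irrefl 0 hz
  have hgcont : Continuous g := by
    apply Continuous.div
    · exact Complex.continuous_ofReal.comp
        (continuous_const.mul ((continuous_const.sub (continuous_pow 2)).sqrt))
    · exact Complex.continuous_ofReal.sub continuous_const
    · exact hgne
  -- substitution x = 2 cos θ
  have hsub : m = ∫ θ in (0:ℝ)..Real.pi, 2 * Complex.sin θ * g (2 * Real.cos θ) := by
    have h := intervalIntegral.integral_comp_smul_deriv
      (f := fun θ : ℝ => 2 * Real.cos θ) (f' := fun θ : ℝ => 2 * -Real.sin θ)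
      (g := g) (a := Real.pi) (b := 0)
      (fun θ _ => (Real.hasDerivAt_cos θ).const_mul 2)
      ((continuous_const.mul Real.continuous_sin.neg).continuousOn) hgcont
    simp only [Function.comp] at h
    norm_num [Real.cos_pi, Real.cos_zero] at h
    have hm : m = ∫ x in (-2 : ℝ)..2, g x := rfl
    rw [hm, ← h]
    exact (intervalIntegral.integral_symm Real.pi 0).symm
  -- the symmetric integrand
  set G : ℝ → ℂ := fun θ =>
    ((2 * Real.sin θ : ℝ) : ℂ) ^ 2 / (2 * (Real.cos θ : ℂ) - z) with hG
  have hGden : ∀ θ : ℝ, 2 * (Real.cos θ : ℂ) - z ≠ 0 := by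
    intro θ
    have := hgne (2 * Real.cos θ)
    push_cast at this ⊢
    exact this
  have hGcont : Continuous G := by
    apply Continuous.div
    · exact (Complex.continuous_ofReal.comp
        (continuous_const.mul Real.continuous_sin)).pow 2
    · exact (continuous_const.mul
        (Complex.continuous_ofReal.comp Real.continuous_cos)).sub continuous_const
    · exact hGden
  -- step 2 : rewrite the integrand on [0, π]
  have hcongr2 : Set.EqOn (fun θ : ℝ => 2 * Complex.sin θ * g (2 * Real.cos θ))
      (fun θ : ℝ => ((1 / (2 * Real.pi) : ℝ) : ℂ) * G θ) (Set.uIcc 0 Real.pi) := by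
    intro θ hθ
    rw [Set.uIcc_of_le Real.pi_pos.le] at hθ
    have hsin0 : 0 ≤ Real.sin θ := Real.sin_nonneg_of_nonneg_of_le_pi hθ.1 hθ.2
    have hsqrt : Real.sqrt (4 - (2 * Real.cos θ) ^ 2) = 2 * Real.sin θ := by
      rw [show 4 - (2 * Real.cos θ) ^ 2 = (2 * Real.sin θ) ^ 2 by
        have := Real.sin_sq_add_cos_sq θ; nlinarith]
      rw [Real.sqrt_sq (by positivity)]
    simp only [hG, hg]
    rw [hsqrt]
    push_cast
    ring
  have hm2 : m = ((1 / (2 * Real.pi) : ℝ) : ℂ) * ∫ θ in (0:ℝ)..Real.pi, G θ := by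
    rw [hsub, intervalIntegral.integral_congr hcongr2, intervalIntegral.integral_const_mul]
  -- step 3 : evenness
  have heven : ∫ θ in (-Real.pi)..(0:ℝ), G θ = ∫ θ in (0:ℝ)..Real.pi, G θ := by
    have h1 : ∫ θ in (0:ℝ)..Real.pi, G (-θ) = ∫ θ in (-Real.pi)..(0:ℝ), G θ := by
      have := intervalIntegral.integral_comp_neg (a := (0:ℝ)) (b := Real.pi) G
      simpa using this
    rw [← h1]
    congr 1
    funext θ
    simp only [hG]
    rw [Real.sin_neg, Real.cos_neg]
    push_cast
    ring
  have hsplit : ∫ θ in (-Real.pi)..Real.pi, G θ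
      = (∫ θ in (-Real.pi)..(0:ℝ), G θ) + ∫ θ in (0:ℝ)..Real.pi, G θ :=
    (intervalIntegral.integral_add_adjacent_intervals
      (hGcont.intervalIntegrable _ _) (hGcont.intervalIntegrable _ _)).symm
  have hkey : ∫ θ in (-Real.pi)..Real.pi, G θ = -4 * Real.pi / q :=
    key_integral z q hq hzq
  have hhalf : ∫ θ in (0:ℝ)..Real.pi, G θ = -2 * Real.pi / q := by
    rw [heven, hkey] at hsplit
    have h2 : (∫ θ in (0:ℝ)..Real.pi, G θ) = (-4 * (Real.pi:ℂ) / q) / 2 := by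
      rw [hsplit]; ring
    rw [h2]; ring
  have hm3 : m = -q⁻¹ := by
    rw [hm2, hhalf]
    push_cast
    field_simp
  rw [hm3, hzq]
  field_simp
  ring
end
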